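/- In the uniform-price auction with N bidders whose values are i.i.d. from a distribution F supported in [1, D], for any price function P : ℝ≥0^N → ℝ≥0, any coalition I ⊆ {1,…,N} of size m, any true values v_I ∈ ℝ≥0^m for the coalition, any joint deviation b_I ∈ ℝ≥0^m, and any member i ∈ I: E over v_{-I} drawn i.i.d. from F of [ u(v_i, P(b_I, v_{-I})) − u(v_i, P(v_I, v_{-I})) ] ≤ D · Δ_{N,m}^worst, where u(v, p) = (v − p)·1[v ≥ p] is a bidder's utility when facing price p. In particular the auction is (m, ε)-group Bayesian incentive-compatible with ε = D · Δ_{N,m}^worst. -/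

import Mathlib

open MeasureTheory ProbabilityTheory Filter

noncomputable section

noncomputable def sortedVal {N : ℕ} (v : Fin N → ℝ) (i : ℕ) : ℝ :=
  (Multiset.sort (↑(List.ofFn v)) (· ≤ ·)).getD (N - i) 0

noncomputable def argmaxIdx (S : Finset ℕ) (f : ℕ → ℝ) : ℕ :=
  WithBot.unbotD 0 ((S.filter fun i => ∀ j ∈ S, f j ≤ f i).max)

noncomputable def ERMIdx (c : ℝ) {N : ℕ} (v : Fin N → ℝ) : ℕ :=
  argmaxIdx ((Finset.Icc 1 N).filter fun i => c * N < (i : ℝ))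
    (fun i => (i : ℝ) * sortedVal v i)

noncomputable def ERM (c : ℝ) {N : ℕ} (v : Fin N → ℝ) : ℝ :=
  sortedVal v (ERMIdx c v)

/-- Incentive-awareness measure `δ_I(v_I, v_{-I})` of a price function `P`,
where the coordinates in `I` are the manipulable ones and `v` records both
`v_I` (on `I`) and `v_{-I}` (off `I`). -/
noncomputable def deltaIdx {N : ℕ} (P : (Fin N → ℝ) → ℝ) (I : Finset (Fin N))
    (v : Fin N → ℝ) : ℝ :=
  1 - sInf {p : ℝ | ∃ b : Fin N → ℝ, (∀ j, 0 ≤ b j) ∧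
      p = P fun j => if j ∈ I then b j else v j} / P v

/-- Worst-case incentive-awareness measure `δ_m^worst(v_{-I})`
(only the coordinates of `v` off `I` matter). -/
noncomputable def deltaWorstIdx {N : ℕ} (P : (Fin N → ℝ) → ℝ) (I : Finset (Fin N))
    (v : Fin N → ℝ) : ℝ :=
  sSup {x : ℝ | ∃ u : Fin N → ℝ, (∀ j, 0 ≤ u j) ∧
      x = deltaIdx P I fun j => if j ∈ I then u j else v j}

/-- `Δ_{N,m}^worst` with explicit index set `I`:
expectation of `δ^worst(v_{-I})` over i.i.d. samples from `μ`. -/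
noncomputable def DeltaWorstIdx {N : ℕ} (μ : Measure ℝ) (P : (Fin N → ℝ) → ℝ)
    (I : Finset (Fin N)) : ℝ :=
  ∫ v : Fin N → ℝ, deltaWorstIdx P I v ∂(Measure.pi fun _ => μ)

/-- The index set `{0, …, m-1}` inside `Fin N`. -/
noncomputable def firstIdx (N m : ℕ) : Finset (Fin N) :=
  Finset.univ.filter fun j => (j : ℕ) < m

/-- The worst-case incentive-awareness measure `Δ_{N,m}^worst`. -/
noncomputable def DeltaWorst {N : ℕ} (μ : Measure ℝ) (P : (Fin N → ℝ) → ℝ) (m : ℕ) : ℝ :=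
  DeltaWorstIdx μ P (firstIdx N m)

/-- Append-based incentive-awareness measure `δ_I(v_I, v_{-I})` for `P = ERM^c`. -/
noncomputable def deltaIA (c : ℝ) {m n : ℕ} (vI : Fin m → ℝ) (w : Fin n → ℝ) : ℝ :=
  1 - sInf {p : ℝ | ∃ b : Fin m → ℝ, (∀ i, 0 ≤ b i) ∧ p = ERM c (Fin.append b w)} /
      ERM c (Fin.append vI w)

/-- Append-based worst-case incentive-awareness measure `δ_m^worst(v_{-I})` for `P = ERM^c`. -/
noncomputable def deltaWorstA (c : ℝ) (m : ℕ) {n : ℕ} (w : Fin n → ℝ) : ℝ :=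
  sSup {x : ℝ | ∃ vI : Fin m → ℝ, (∀ i, 0 ≤ vI i) ∧ x = deltaIA c vI w}

/-- The index `k* = argmax_{i > cN} i·v_i` selected by `ERM^c` when the top `m`
of the `N` samples are fixed to `+∞` and the remaining `N - m` samples are `w`
(so `v_i` for `i > m` is the `(i-m)`-th largest entry of `w`);
ties are broken towards the larger index. -/
noncomputable def kStarInf (c : ℝ) (N m : ℕ) {n : ℕ} (w : Fin n → ℝ) : ℕ :=
  argmaxIdx ((Finset.Icc (m + 1) N).filter fun i => c * N < (i : ℝ))
    (fun i => (i : ℝ) * sortedVal w (i - m))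

/-- Interim utility `u^K(v, p)` of a bidder with value `v` in a second price
auction with reserve price `p` among `K` i.i.d. bidders from `μ`. -/
noncomputable def uK (μ : Measure ℝ) (K : ℕ) (v p : ℝ) : ℝ :=
  ∫ x : Fin (K - 1) → ℝ, max (v - (List.ofFn x).foldr max p) 0 ∂(Measure.pi fun _ => μ)

/-- A distribution on `[0, ∞)` has monotone hazard rate (MHR) if it has a density `f`
whose hazard rate `f v / (1 - F v)` is non-decreasing on its support. -/
def IsMHR (μ : Measure ℝ) : Prop :=
  ∃ f : ℝ → ℝ, (∀ x, 0 ≤ f x) ∧ (∀ x, x < 0 → f x = 0) ∧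
    μ = MeasureTheory.volume.withDensity (fun x => ENNReal.ofReal (f x)) ∧
    MonotoneOn (fun v => f v / (1 - ProbabilityTheory.cdf μ v)) (Function.support f)

/-- `α`-strong regularity: a density `f`, positive on an interval support contained
in `[0, ∞)`, whose virtual value `φ(x) = x - (1 - F x)/f x` satisfies
`φ(y) - φ(x) ≥ α (y - x)` whenever `x < y` on the support. -/
def IsAlphaStronglyRegular (α : ℝ) (μ : Measure ℝ) : Prop :=
  ∃ f : ℝ → ℝ, (∀ x, 0 ≤ f x) ∧
    μ = MeasureTheory.volume.withDensity (fun x => ENNReal.ofReal (f x)) ∧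
    Set.OrdConnected (Function.support f) ∧
    (∀ x ∈ Function.support f, 0 ≤ x) ∧
    (∀ x ∈ Function.support f, ∀ y ∈ Function.support f, x < y →
      α * (y - x) ≤
        (y - (1 - ProbabilityTheory.cdf μ y) / f y) -
          (x - (1 - ProbabilityTheory.cdf μ x) / f x))

end

section Aux

open MeasureTheory ProbabilityTheory Filter

variable {N : ℕ} {P : (Fin N → ℝ) → ℝ} {I : Finset (Fin N)}

/-- The set of attainable prices in `deltaIdx`. -/
def priceSet (P : (Fin N → ℝ) → ℝ) (I : Finset (Fin N)) (v : Fin N → ℝ) : Set ℝ :=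
  {p : ℝ | ∃ b : Fin N → ℝ, (∀ j, 0 ≤ b j) ∧
      p = P fun j => if j ∈ I then b j else v j}

lemma deltaIdx_eq (v : Fin N → ℝ) :
    deltaIdx P I v = 1 - sInf (priceSet P I v) / P v := rfl

lemma priceSet_nonneg (hP0 : ∀ x, 0 ≤ P x) (v : Fin N → ℝ) :
    ∀ p ∈ priceSet P I v, 0 ≤ p := by
  rintro p ⟨b, -, rfl⟩; exact hP0 _

lemma priceSet_bddBelow (hP0 : ∀ x, 0 ≤ P x) (v : Fin N → ℝ) :
    BddBelow (priceSet P I v) :=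
  ⟨0, priceSet_nonneg hP0 v⟩

lemma sInf_priceSet_nonneg (hP0 : ∀ x, 0 ≤ P x) (v : Fin N → ℝ) :
    0 ≤ sInf (priceSet P I v) :=
  Real.sInf_nonneg (priceSet_nonneg hP0 v)

lemma self_mem_priceSet (v : Fin N → ℝ) (hv : ∀ j ∈ I, 0 ≤ v j) :
    P v ∈ priceSet P I v := by
  refine ⟨fun j => if j ∈ I then v j else 0, ?_, ?_⟩
  · intro j; by_cases h : j ∈ I <;> simp [h, hv]
  · congr 1; funext j; by_cases h : j ∈ I <;> simp [h]

lemma deltaIdx_le_one (hP0 : ∀ x, 0 ≤ P x) (v : Fin N → ℝ) :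
    deltaIdx P I v ≤ 1 := by
  rw [deltaIdx_eq]
  have := div_nonneg (sInf_priceSet_nonneg (I := I) hP0 v) (hP0 v)
  linarith

lemma deltaIdx_nonneg (hP0 : ∀ x, 0 ≤ P x) (v : Fin N → ℝ)
    (hv : ∀ j ∈ I, 0 ≤ v j) : 0 ≤ deltaIdx P I v := by
  rw [deltaIdx_eq]
  by_cases hz : P v = 0
  · rw [hz, div_zero]; norm_num
  · have hq : sInf (priceSet P I v) ≤ P v :=
      csInf_le (priceSet_bddBelow hP0 v) (self_mem_priceSet v hv)
    have hpos : 0 < P v := lt_of_le_of_ne (hP0 v) (Ne.symm hz)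
    have : sInf (priceSet P I v) / P v ≤ 1 := (div_le_one hpos).mpr hq
    linarith

lemma le_deltaWorstIdx (hP0 : ∀ x, 0 ≤ P x) (w u : Fin N → ℝ)
    (hu : ∀ j, 0 ≤ u j) :
    deltaIdx P I (fun j => if j ∈ I then u j else w j) ≤ deltaWorstIdx P I w := by
  apply le_csSup
  · refine ⟨1, ?_⟩
    rintro x ⟨u', -, rfl⟩
    exact deltaIdx_le_one hP0 _
  · exact ⟨u, hu, rfl⟩

lemma deltaWorstIdx_nonneg (hP0 : ∀ x, 0 ≤ P x) (w : Fin N → ℝ) :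
    0 ≤ deltaWorstIdx P I w := by
  refine le_trans (deltaIdx_nonneg hP0 (fun j => if j ∈ I then (0 : ℝ) else w j)
    (fun j hj => by simp [hj]))
    (le_deltaWorstIdx hP0 w (fun _ => 0) (fun _ => le_refl _))

lemma key_pointwise {D : ℝ} (hD : 1 ≤ D) (hP : ∀ x, 0 ≤ P x ∧ P x ≤ D)
    (vI bI : Fin N → ℝ) (hvI : ∀ j, 0 ≤ vI j) (hbI : ∀ j, 0 ≤ bI j)
    (i : Fin N) (w : Fin N → ℝ) :
    ((if P (fun j => if j ∈ I then bI j else w j) ≤ vI i then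
        vI i - P (fun j => if j ∈ I then bI j else w j) else 0)
      - (if P (fun j => if j ∈ I then vI j else w j) ≤ vI i then
          vI i - P (fun j => if j ∈ I then vI j else w j) else 0))
      ≤ D * deltaWorstIdx P I w := by
  have hP0 : ∀ x, 0 ≤ P x := fun x => (hP x).1
  set v' : Fin N → ℝ := fun j => if j ∈ I then vI j else w j with hv'
  set q : ℝ := sInf (priceSet P I v') with hqdef
  have hq0 : 0 ≤ q := sInf_priceSet_nonneg hP0 v'
  have hvI' : ∀ j ∈ I, 0 ≤ v' j := fun j hj => by simp [hv', hj, hvI j]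
  have hqv : q ≤ P v' :=
    csInf_le (priceSet_bddBelow hP0 v') (self_mem_priceSet v' hvI')
  have hB : P (fun j => if j ∈ I then bI j else w j) ∈ priceSet P I v' := by
    refine ⟨bI, hbI, ?_⟩
    congr 1; funext j; by_cases h : j ∈ I <;> simp [h, hv']
  have hqB : q ≤ P (fun j => if j ∈ I then bI j else w j) :=
    csInf_le (priceSet_bddBelow hP0 v') hB
  have hgain : ((if P (fun j => if j ∈ I then bI j else w j) ≤ vI i then
        vI i - P (fun j => if j ∈ I then bI j else w j) else 0)
      - (if P (fun j => if j ∈ I then vI j else w j) ≤ vI i then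
          vI i - P (fun j => if j ∈ I then vI j else w j) else 0)) ≤ P v' - q := by
    have hv'eq : (fun j => if j ∈ I then vI j else w j) = v' := rfl
    rw [hv'eq]
    split_ifs with h1 h2 h2 <;> linarith
  have hdelta : P v' - q ≤ D * deltaIdx P I v' := by
    rw [deltaIdx_eq, ← hqdef]
    by_cases hz : P v' = 0
    · rw [hz, div_zero]
      have : q = 0 := le_antisymm (hz ▸ hqv) hq0
      linarith
    · have hpos : 0 < P v' := lt_of_le_of_ne (hP0 v') (Ne.symm hz)
      have hdn : 0 ≤ 1 - q / P v' := by
        have : q / P v' ≤ 1 := (div_le_one hpos).mpr hqv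
        linarith
      have heq : P v' - q = P v' * (1 - q / P v') := by
        field_simp
      rw [heq]
      exact mul_le_mul_of_nonneg_right (hP v').2 hdn
  have hle : deltaIdx P I v' ≤ deltaWorstIdx P I w :=
    le_deltaWorstIdx hP0 w vI hvI
  calc ((if P (fun j => if j ∈ I then bI j else w j) ≤ vI i then
        vI i - P (fun j => if j ∈ I then bI j else w j) else 0)
      - (if P (fun j => if j ∈ I then vI j else w j) ≤ vI i then
          vI i - P (fun j => if j ∈ I then vI j else w j) else 0))
      ≤ P v' - q := hgain
    _ ≤ D * deltaIdx P I v' := hdelta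
    _ ≤ D * deltaWorstIdx P I w :=
        mul_le_mul_of_nonneg_left hle (by linarith)

end Aux

open MeasureTheory ProbabilityTheory Filter in
/-- In the uniform-price auction with `N` bidders with values i.i.d.
from a distribution supported in `[1, D]` and any price function `P` (taking values in
`[0, D]`), for any coalition `I` of size `m` with true values `vI`, any joint deviation
`bI`, and any member `i ∈ I`, the expected utility gain of `i` is at most
`D · Δ_{N,m}^worst`; i.e., the auction is `(m, D·Δ_{N,m}^worst)`-group BIC.
Here `u(v, p) = (v - p)·1[v ≥ p]`. -/
theorem uniformPrice_group_BIC (N m : ℕ) (D : ℝ) (hD : 1 ≤ D)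
    (μ : Measure ℝ) (hμ : IsProbabilityMeasure μ) (hsupp : μ (Set.Icc 1 D)ᶜ = 0)
    (P : (Fin N → ℝ) → ℝ) (hP : ∀ x, 0 ≤ P x ∧ P x ≤ D)
    (I : Finset (Fin N)) (hI : I.card = m)
    (hInt : Integrable (deltaWorstIdx P I) (Measure.pi fun _ : Fin N => μ))
    (vI : Fin N → ℝ) (hvI : ∀ j, 0 ≤ vI j)
    (bI : Fin N → ℝ) (hbI : ∀ j, 0 ≤ bI j)
    (i : Fin N) (hi : i ∈ I) :
    (∫ w : Fin N → ℝ,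
        ((if P (fun j => if j ∈ I then bI j else w j) ≤ vI i then
            vI i - P (fun j => if j ∈ I then bI j else w j) else 0)
          - (if P (fun j => if j ∈ I then vI j else w j) ≤ vI i then
              vI i - P (fun j => if j ∈ I then vI j else w j) else 0))
        ∂(Measure.pi fun _ : Fin N => μ))
      ≤ D * DeltaWorstIdx μ P I := by
  have hP0 : ∀ x, 0 ≤ P x := fun x => (hP x).1
  have hkey := fun w => key_pointwise (P := P) (I := I) hD hP vI bI hvI hbI i w
  by_cases hf : Integrable (fun w : Fin N → ℝ =>
      ((if P (fun j => if j ∈ I then bI j else w j) ≤ vI i then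
          vI i - P (fun j => if j ∈ I then bI j else w j) else 0)
        - (if P (fun j => if j ∈ I then vI j else w j) ≤ vI i then
            vI i - P (fun j => if j ∈ I then vI j else w j) else 0)))
      (Measure.pi fun _ : Fin N => μ)
  · calc (∫ w : Fin N → ℝ,
        ((if P (fun j => if j ∈ I then bI j else w j) ≤ vI i then
            vI i - P (fun j => if j ∈ I then bI j else w j) else 0)
          - (if P (fun j => if j ∈ I then vI j else w j) ≤ vI i then
              vI i - P (fun j => if j ∈ I then vI j else w j) else 0))
        ∂(Measure.pi fun _ : Fin N => μ))
        ≤ ∫ w : Fin N → ℝ, D * deltaWorstIdx P I w ∂(Measure.pi fun _ : Fin N => μ) :=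
          integral_mono hf (hInt.const_mul D) hkey
      _ = D * DeltaWorstIdx μ P I := by
          rw [MeasureTheory.integral_const_mul]; rfl
  · rw [integral_undef hf]
    have h1 : 0 ≤ DeltaWorstIdx μ P I :=
      integral_nonneg fun w => deltaWorstIdx_nonneg hP0 w
    positivity
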